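/- For p ∈ (1,∞) and q ∈ [0,1), the function dn_p(·,q) is real analytic on ℝ. -/

import Mathlib

open Real MeasureTheory Set intervalIntegral Filter

noncomputable section

/-- Incomplete p-elliptic integral of the first kind, type 1. -/
def F1 (p q x : ℝ) : ℝ :=
  ∫ θ in (0:ℝ)..x, |Real.cos θ| ^ (1 - 2/p) / Real.sqrt (1 - q^2 * Real.sin θ ^ 2)

/-- Complete p-elliptic integral of the first kind, type 1. -/
def K1 (p q : ℝ) : ℝ := F1 p q (π/2)

/-- Incomplete p-elliptic integral of the second kind, type 1. -/
def E1 (p q x : ℝ) : ℝ :=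
  ∫ θ in (0:ℝ)..x, Real.sqrt (1 - q^2 * Real.sin θ ^ 2) * |Real.cos θ| ^ (1 - 2/p)

/-- Complete p-elliptic integral of the second kind, type 1. -/
def E1c (p q : ℝ) : ℝ := E1 p q (π/2)

/-- Incomplete p-elliptic integral of the first kind, type 2. -/
def F2 (p q x : ℝ) : ℝ :=
  ∫ θ in (0:ℝ)..x, (1 - q^2 * Real.sin θ ^ 2) ^ (-(1/p))

/-- Complete p-elliptic integral of the first kind, type 2. -/
def K2 (p q : ℝ) : ℝ := F2 p q (π/2)

open Classical in
/-- Domain of the amplitude parametrization: restricted to `(-π/2, π/2)` when `q = 1` and `p ≤ 2`. -/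
def amDom (p q : ℝ) : Set ℝ := if q = 1 ∧ p ≤ 2 then Ioo (-(π/2)) (π/2) else univ

/-- `g` is the inverse of `f`, with `f` regarded as a bijection from `S` onto `ℝ`. -/
def IsInverseOn (f g : ℝ → ℝ) (S : Set ℝ) : Prop :=
  (∀ y ∈ S, g (f y) = y) ∧ ∀ x : ℝ, g x ∈ S ∧ f (g x) = x

section Helpers
open Topology
open scoped NNReal ENNReal

open Real Set Filter Topology

lemma myAnalyticAt_sin (x : ℝ) : AnalyticAt ℝ Real.sin x := by
  have h1 : AnalyticAt ℂ Complex.sin (x : ℂ) := by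
    rw [Complex.analyticAt_iff_eventually_differentiableAt]
    exact Filter.Eventually.of_forall fun z => Complex.differentiable_sin z
  have h3 : AnalyticAt ℝ (fun y : ℝ => Complex.reCLM (Complex.sin (Complex.ofRealCLM y))) x :=
    (Complex.reCLM.analyticAt _).comp (h1.restrictScalars.comp (Complex.ofRealCLM.analyticAt _))
  exact h3.congr (Filter.Eventually.of_forall fun y => by
    simp [Complex.sin_ofReal_re])

lemma myAnalyticAt_log {x : ℝ} (hx : 0 < x) : AnalyticAt ℝ Real.log x := by
  have h1 : AnalyticAt ℂ Complex.log (x : ℂ) :=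
    analyticAt_clog (by simp [Complex.slitPlane, hx])
  have h3 : AnalyticAt ℝ (fun y : ℝ => Complex.reCLM (Complex.log (Complex.ofRealCLM y))) x :=
    (Complex.reCLM.analyticAt _).comp (h1.restrictScalars.comp (Complex.ofRealCLM.analyticAt _))
  exact h3.congr (Filter.Eventually.of_forall fun y => by
    simp [Complex.log_ofReal_re])

lemma myAnalyticAt_rpow {f : ℝ → ℝ} {x c : ℝ} (hf : AnalyticAt ℝ f x) (h0 : 0 < f x) :
    AnalyticAt ℝ (fun y => f y ^ c) x := by
  have hexp : AnalyticAt ℝ (fun y => Real.exp (Real.log (f y) * c)) x :=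
    analyticAt_rexp.comp (((myAnalyticAt_log h0).comp hf).mul analyticAt_const)
  have hpos : ∀ᶠ y in 𝓝 x, 0 < f y :=
    hf.continuousAt.eventually (eventually_gt_nhds h0)
  exact hexp.congr (hpos.mono fun y hy => (Real.rpow_def_of_pos hy c).symm)

open Real Set Filter Topology
open scoped NNReal ENNReal

lemma myAnalyticAt_antideriv {g F : ℝ → ℝ} (hgc : Continuous g) {x₀ : ℝ}
    (hg : AnalyticAt ℝ g x₀) (hF : ∀ x, HasDerivAt F (g x) x) :
    AnalyticAt ℝ F x₀ := by
  obtain ⟨pS, R, hR⟩ := hg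
  obtain ⟨s, hs1, hsR⟩ := ENNReal.lt_iff_exists_nnreal_btwn.1 hR.r_pos
  have hs0' : (0:ℝ≥0) < s := by exact_mod_cast hs1
  have hs0 : (0:ℝ) < s := by exact_mod_cast hs0'
  have hsrad : (s : ℝ≥0∞) < pS.radius := lt_of_lt_of_le hsR hR.r_le
  obtain ⟨α, hα, C, hC0, hbound⟩ := pS.norm_mul_pow_le_mul_pow_of_lt_radius hsrad
  set a : ℕ → ℝ := fun n => pS.coeff n with ha
  have hbound' : ∀ n, |a n| * (s:ℝ)^n ≤ C * α^n := by
    intro n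
    have := hbound n
    rwa [FormalMultilinearSeries.norm_apply_eq_norm_coef] at this
  set c : ℕ → ℝ := fun n => Nat.casesOn n (F x₀) (fun m => a m / (m+1)) with hc
  have hcabs : ∀ n : ℕ, |c (n+1)| ≤ |a n| := by
    intro n
    have h1 : (1:ℝ) ≤ (n+1 : ℝ) := by exact_mod_cast Nat.one_le_iff_ne_zero.2 (Nat.succ_ne_zero n)
    have : |c (n+1)| = |a n| / (n+1 : ℝ) := by
      simp only [hc, abs_div]
      rw [abs_of_pos (show (0:ℝ) < (n:ℝ)+1 by positivity)]
    rw [this]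
    exact div_le_self (abs_nonneg _) h1
  -- summability of the integrated series
  have hkey : ∀ z : ℝ, |z| < (s:ℝ) → ∀ n, ‖c (n+1) * z ^ (n+1)‖ ≤ (C * s) * α ^ n := by
    intro z hz n
    have hpow : |z| ^ (n+1) ≤ (s:ℝ) ^ (n+1) := pow_le_pow_left₀ (abs_nonneg z) hz.le _
    have h1 : ‖c (n+1) * z ^ (n+1)‖ = |c (n+1)| * |z| ^ (n+1) := by
      rw [Real.norm_eq_abs, abs_mul, abs_pow]
    rw [h1]
    calc |c (n+1)| * |z| ^ (n+1) ≤ |a n| * ((s:ℝ)^n * s) := by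
          have := mul_le_mul (hcabs n) hpow (by positivity) (abs_nonneg _)
          rwa [pow_succ] at this
      _ = (|a n| * (s:ℝ)^n) * s := by ring
      _ ≤ (C * α^n) * s := mul_le_mul_of_nonneg_right (hbound' n) hs0.le
      _ = (C * s) * α^n := by ring
  have hgeo : Summable (fun n : ℕ => (C * s) * α ^ n) :=
    (summable_geometric_of_lt_one hα.1.le hα.2).mul_left _
  have hsummable : ∀ z : ℝ, |z| < (s:ℝ) → Summable (fun n => c n * z ^ n) := by
    intro z hz
    rw [← summable_nat_add_iff 1]
    exact Summable.of_norm_bounded hgeo (hkey z hz)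
  set h : ℝ → ℝ := fun x => ∑' n, c n * (x - x₀) ^ n with hh
  set d : ℕ → ℝ → ℝ := fun n y => c n * (n * (y - x₀) ^ (n-1)) with hd
  set t : Set ℝ := Metric.ball x₀ (s:ℝ) with ht
  have hmemt : ∀ y ∈ t, |y - x₀| < (s:ℝ) := by
    intro y hy
    simpa [ht, Metric.mem_ball, Real.dist_eq] using hy
  have hx₀t : x₀ ∈ t := Metric.mem_ball_self hs0
  set u : ℕ → ℝ := fun n => Nat.casesOn n (0:ℝ) (fun m => C * α ^ m) with hu
  have husum : Summable u := by
    rw [← (summable_nat_add_iff 1)]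
    exact (summable_geometric_of_lt_one hα.1.le hα.2).mul_left _
  have hderivterm : ∀ (n : ℕ) (y : ℝ), HasDerivAt (fun x => c n * (x - x₀) ^ n) (d n y) y := by
    intro n y
    have h1 : HasDerivAt (fun x : ℝ => (x - x₀) ^ n) ((n : ℝ) * (y - x₀) ^ (n-1)) y := by
      have h2 := (hasDerivAt_pow n (y - x₀)).comp y ((hasDerivAt_id y).sub_const x₀)
      simp only [Function.comp_def, mul_one] at h2
      exact h2
    exact h1.const_mul (c n)
  have hcval : ∀ m : ℕ, |c (m+1)| * ((m:ℝ)+1) = |a m| := by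
    intro m
    simp only [hc]
    rw [abs_div, abs_of_pos (show (0:ℝ) < (m:ℝ)+1 by positivity),
      div_mul_cancel₀ _ (show ((m:ℝ)+1) ≠ 0 by positivity)]
  have hdbound : ∀ (n : ℕ) (y : ℝ), y ∈ t → ‖d n y‖ ≤ u n := by
    intro n y hy
    match n with
    | 0 => simp [hd, hu]
    | (m+1) =>
      have hz := hmemt y hy
      have h2 : ‖d (m+1) y‖ = |c (m+1)| * (((m:ℝ)+1) * |y - x₀| ^ m) := by
        simp only [hd, Real.norm_eq_abs, abs_mul, abs_pow, Nat.add_sub_cancel]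
        rw [abs_of_pos (show (0:ℝ) < ((m+1:ℕ):ℝ) by positivity)]
        push_cast
        ring
      have h3 : ‖d (m+1) y‖ ≤ |a m| * (s:ℝ)^m := by
        rw [h2, show |c (m+1)| * (((m:ℝ)+1) * |y - x₀| ^ m)
            = (|c (m+1)| * ((m:ℝ)+1)) * |y - x₀| ^ m by ring, hcval m]
        exact mul_le_mul_of_nonneg_left (pow_le_pow_left₀ (abs_nonneg _) hz.le m) (abs_nonneg _)
      exact h3.trans (hbound' m)
  -- the local sum function h is differentiable with derivative g on t
  have hg0 : Summable fun n => c n * (x₀ - x₀) ^ n := by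
    apply hsummable
    simpa using hs0
  have hdsum : ∀ y ∈ t, HasDerivAt h (∑' n, d n y) y := by
    intro y hy
    exact hasDerivAt_tsum_of_isPreconnected husum Metric.isOpen_ball
      (convex_ball x₀ (s:ℝ)).isPreconnected (fun n z _ => hderivterm n z)
      hdbound hx₀t hg0 hy
  have hgsum : ∀ y ∈ t, HasSum (fun n => a n * (y - x₀) ^ n) (g y) := by
    intro y hy
    have hmem : y - x₀ ∈ Metric.eball (0:ℝ) R := by
      have h1 : ‖y - x₀‖₊ < s := by
        rw [← NNReal.coe_lt_coe]
        simpa [Real.dist_eq] using hmemt y hy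
      simp only [Metric.mem_eball, edist_zero_right]
      exact lt_trans (by exact_mod_cast h1) hsR
    have := hR.hasSum hmem
    simp only [FormalMultilinearSeries.apply_eq_pow_smul_coeff, smul_eq_mul,
      add_sub_cancel] at this
    exact this.congr_fun fun n => by rw [mul_comm]
  have hderiv : ∀ y ∈ t, HasDerivAt h (g y) y := by
    intro y hy
    have hds : Summable (fun n => d n y) :=
      Summable.of_norm_bounded husum (fun n => hdbound n y hy)
    have heq : ∑' n, d n y = g y := by
      rw [Summable.tsum_eq_zero_add hds]
      have h0 : d 0 y = 0 := by simp [hd]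
      have h1 : ∀ n : ℕ, d (n+1) y = a n * (y - x₀) ^ n := by
        intro n
        have : |c (n+1)| * ((n:ℝ)+1) = |a n| := hcval n
        simp only [hd, hc, Nat.add_sub_cancel]
        push_cast
        field_simp
      rw [h0, zero_add, tsum_congr h1, (hgsum y hy).tsum_eq]
    rw [← heq]
    exact hdsum y hy
  -- h agrees with F on t
  have hhx₀ : h x₀ = F x₀ := by
    have : ∀ n : ℕ, n ≠ 0 → c n * (x₀ - x₀) ^ n = 0 := by
      intro n hn
      simp [zero_pow hn]
    show (∑' (n:ℕ), c n * (x₀ - x₀) ^ n) = F x₀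
    rw [tsum_eq_single 0 this]
    simp [hc]
  have hFh : ∀ x ∈ t, h x = F x := by
    intro x hx
    have hconv : uIcc x₀ x ⊆ t :=
      (convex_ball x₀ (s:ℝ)).ordConnected.uIcc_subset hx₀t hx
    have h1 : ∫ θ in x₀..x, g θ = F x - F x₀ :=
      intervalIntegral.integral_eq_sub_of_hasDerivAt (fun θ _ => hF θ)
        (hgc.intervalIntegrable _ _)
    have h2 : ∫ θ in x₀..x, g θ = h x - h x₀ :=
      intervalIntegral.integral_eq_sub_of_hasDerivAt (fun θ hθ => hderiv θ (hconv hθ))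
        (hgc.intervalIntegrable _ _)
    have := h1.symm.trans h2
    rw [hhx₀] at this
    linarith
  -- h is analytic at x₀
  have hcoeff : ∀ n, (FormalMultilinearSeries.ofScalars ℝ c).coeff n = c n := by
    intro n
    simp only [FormalMultilinearSeries.coeff, FormalMultilinearSeries.ofScalars,
      ContinuousMultilinearMap.smul_apply, ContinuousMultilinearMap.mkPiAlgebraFin_apply,
      smul_eq_mul]
    rw [show (List.ofFn (1 : Fin n → ℝ)).prod = 1 by rw [List.prod_ofFn]; simp, mul_one]
  have hanal : AnalyticAt ℝ h x₀ := by
    refine ⟨FormalMultilinearSeries.ofScalars ℝ c, ?_⟩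
    rw [hasFPowerSeriesAt_iff]
    filter_upwards [Metric.ball_mem_nhds (0:ℝ) hs0] with z hz
    have hz' : |z| < (s:ℝ) := by simpa [Real.dist_eq] using hz
    have := (hsummable z hz').hasSum
    simp only [hcoeff, smul_eq_mul, hh, add_sub_cancel_left]
    exact this.congr_fun fun n => by rw [mul_comm]
  exact hanal.congr (Filter.eventually_of_mem (Metric.ball_mem_nhds x₀ hs0)
    (fun x hx => hFh x hx))

end Helpers

/-- For `p ∈ (1,∞)` and `q ∈ [0,1)`, the function `dn_p(·,q)` is real analytic on `ℝ`. -/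
theorem dnp_analytic (p q : ℝ) (hp : 1 < p) (hq : q ∈ Set.Ico (0:ℝ) 1)
    (am : ℝ → ℝ) (ham : IsInverseOn (F2 p q) am Set.univ) :
    AnalyticOnNhd ℝ (fun x : ℝ => (1 - q^2 * Real.sin (am x) ^ 2) ^ (1/p)) Set.univ := by
  obtain ⟨hq0, hq1⟩ := hq
  set g : ℝ → ℝ := fun θ => (1 - q^2 * Real.sin θ ^ 2) ^ (-(1/p)) with hgdef
  have hupos : ∀ θ : ℝ, 0 < 1 - q^2 * Real.sin θ ^ 2 := by
    intro θ
    have h1 : Real.sin θ ^ 2 ≤ 1 := Real.sin_sq_le_one θ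
    nlinarith [sq_nonneg (Real.sin θ)]
  have huanal : ∀ θ : ℝ, AnalyticAt ℝ (fun x => 1 - q^2 * Real.sin x ^ 2) θ := fun θ =>
    analyticAt_const.sub (analyticAt_const.mul ((myAnalyticAt_sin θ).pow 2))
  have hganal : ∀ θ, AnalyticAt ℝ g θ := fun θ => myAnalyticAt_rpow (huanal θ) (hupos θ)
  have hgc : Continuous g := continuous_iff_continuousAt.2 fun θ => (hganal θ).continuousAt
  have hgpos : ∀ θ, 0 < g θ := fun θ => Real.rpow_pos_of_pos (hupos θ) _
  have hF : ∀ x, HasDerivAt (F2 p q) (g x) x := fun x =>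
    (hgc.integral_hasStrictDerivAt 0 x).hasDerivAt
  have hFanal : ∀ x, AnalyticAt ℝ (F2 p q) x := fun x =>
    myAnalyticAt_antideriv hgc (hganal x) hF
  have hmono : StrictMono (F2 p q) := strictMono_of_hasDerivAt_pos hF hgpos
  have hsurj : Function.Surjective (F2 p q) := fun x => ⟨am x, (ham.2 x).2⟩
  set e : ℝ ≃o ℝ := StrictMono.orderIsoOfSurjective _ hmono hsurj with he
  have hecoe : ∀ x, e x = F2 p q x := fun x => rfl
  have hame : ∀ x, am x = e.symm x := by
    intro x
    have h1 : e (am x) = x := by rw [hecoe]; exact (ham.2 x).2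
    have h2 := congrArg e.symm h1
    rwa [e.symm_apply_apply] at h2
  set φ := e.toHomeomorph.toOpenPartialHomeomorph with hφ
  have hφcoe : ∀ x, φ x = F2 p q x := fun x => rfl
  have hφsymm : ∀ x, φ.symm x = e.symm x := fun x => rfl
  have hamanal : ∀ x : ℝ, AnalyticAt ℝ am x := by
    intro x
    have hne : g (am x) ≠ 0 := (hgpos _).ne'
    set i : ℝ ≃L[ℝ] ℝ := ContinuousLinearEquiv.unitsEquivAut ℝ (Units.mk0 (g (am x)) hne)
      with hi
    have hsymmx : φ.symm x = am x := by rw [hφsymm, hame]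
    have hφanal : AnalyticAt ℝ φ (φ.symm x) := by
      apply (hFanal _).congr
      filter_upwards with y
      rw [hφcoe]
    have hfd : fderiv ℝ φ (φ.symm x) = (i : ℝ →L[ℝ] ℝ) := by
      have h3 : fderiv ℝ (F2 p q) (am x)
          = ContinuousLinearMap.smulRight (1 : ℝ →L[ℝ] ℝ) (g (am x)) :=
        (hF (am x)).hasFDerivAt.fderiv
      have h4 : fderiv ℝ φ (φ.symm x) = fderiv ℝ (F2 p q) (am x) := by
        rw [hsymmx]
        apply Filter.EventuallyEq.fderiv_eq
        filter_upwards with y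
        rw [hφcoe]
      rw [h4, h3]
      ext w
      simp [hi, ContinuousLinearEquiv.unitsEquivAut, mul_comm]
    have h0 : x ∈ φ.target := by simp [hφ]
    have h5 := φ.analyticAt_symm h0 hφanal hfd
    apply h5.congr
    filter_upwards with y
    rw [hame y, hφsymm]
  intro x _
  exact myAnalyticAt_rpow ((huanal (am x)).comp (hamanal x)) (hupos (am x))
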